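/- arXiv:1103.0170 — 5 statements merged into one kernel-verified Lean document; each statement's English description precedes it below -/
import Mathlib

section
/- For any differential ring (R,d), any commutative ring S with identity, and any ring homomorphism f : R → S, the map f̃ : R → HS defined by f̃(r) = (f(r), f(d(r)), f(d²(r)), …) is a differential ring homomorphism from (R,d) to (HS, ∂_S) with π₀ ∘ f̃ = f, and it is the unique differential ring homomorphism (R,d) → (HS, ∂_S) whose composition with π₀ equals f. -/
open scoped BigOperators

set_option linter.unusedSectionVars false

/-- The ring of Hurwitz series over `R`: all sequences `ℕ → R`, with termwise addition and
the Hurwitz (binomial-convolution) product. -/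
def HS (R : Type*) : Type _ := ℕ → R

namespace HS

variable {R : Type*} [CommRing R]

instance : AddCommGroup (HS R) := Pi.addCommGroup

instance {S : Type*} [Semiring S] [Module S R] : Module S (HS R) :=
  Pi.module ℕ (fun _ => R) S

@[simp] theorem add_apply (a b : HS R) (n : ℕ) : (a + b) n = a n + b n := rfl
@[simp] theorem zero_apply (n : ℕ) : (0 : HS R) n = 0 := rfl
@[simp] theorem smul_apply {S : Type*} [Semiring S] [Module S R] (c : S) (a : HS R) (n : ℕ) :
    (c • a) n = c • a n := rfl

instance : Mul (HS R) :=
  ⟨fun a b n => ∑ j ∈ Finset.range (n + 1), (n.choose j : R) * a j * b (n - j)⟩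

theorem mul_apply (a b : HS R) (n : ℕ) :
    (a * b) n = ∑ j ∈ Finset.range (n + 1), (n.choose j : R) * a j * b (n - j) := rfl

instance : One (HS R) := ⟨fun n => if n = 0 then 1 else 0⟩

theorem one_apply (n : ℕ) : (1 : HS R) n = if n = 0 then 1 else 0 := rfl

private theorem hmul_comm (a b : HS R) : a * b = b * a := by
  funext n
  rw [mul_apply, mul_apply, ← Finset.sum_range_reflect]
  refine Finset.sum_congr rfl fun j hj => ?_
  have hj' : j ≤ n := Nat.lt_succ_iff.mp (Finset.mem_range.mp hj)
  have h1 : n + 1 - 1 - j = n - j := by omega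
  rw [h1, Nat.choose_symm hj', Nat.sub_sub_self hj']
  ring

private theorem hone_mul (a : HS R) : 1 * a = a := by
  funext n
  rw [mul_apply]
  rw [Finset.sum_eq_single 0]
  · simp [one_apply]
  · intro j hj hj0
    simp [one_apply, hj0]
  · intro h
    exact absurd (Finset.mem_range.mpr (Nat.succ_pos n)) h

private theorem hmul_assoc (a b c : HS R) : a * b * c = a * (b * c) := by
  funext n
  rw [mul_apply, mul_apply]
  simp_rw [mul_apply, Finset.mul_sum]
  simp_rw [Finset.sum_mul]
  rw [Finset.sum_sigma', Finset.sum_sigma']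
  refine Finset.sum_nbij' (fun x => ⟨x.2, x.1 - x.2⟩) (fun x => ⟨x.1 + x.2, x.1⟩)
    ?_ ?_ ?_ ?_ ?_
  · rintro ⟨p, i⟩ h
    simp only [Finset.mem_sigma, Finset.mem_range] at h ⊢
    omega
  · rintro ⟨i, j⟩ h
    simp only [Finset.mem_sigma, Finset.mem_range] at h ⊢
    omega
  · rintro ⟨p, i⟩ h
    simp only [Finset.mem_sigma, Finset.mem_range] at h
    dsimp only
    exact congrArg (fun m => (⟨m, i⟩ : Σ _ : ℕ, ℕ)) (by omega)
  · rintro ⟨i, j⟩ h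
    simp only [Finset.mem_sigma, Finset.mem_range] at h
    dsimp only
    exact congrArg (fun m => (⟨i, m⟩ : Σ _ : ℕ, ℕ)) (by omega)
  · rintro ⟨p, i⟩ h
    simp only [Finset.mem_sigma, Finset.mem_range] at h
    have hip : i ≤ p := by omega
    have hpn : p ≤ n := by omega
    have h2 : n - i - (p - i) = n - p := by omega
    have h3 : (n.choose p : R) * (p.choose i : R)
        = (n.choose i : R) * ((n - i).choose (p - i) : R) := by
      rw [← Nat.cast_mul, ← Nat.cast_mul, Nat.choose_mul hip]
    simp only [h2]
    calc ((n.choose p : R) * ((p.choose i : R) * a i * b (p - i)) * c (n - p))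
        = ((n.choose p : R) * (p.choose i : R)) * (a i * b (p - i) * c (n - p)) := by ring
      _ = ((n.choose i : R) * ((n - i).choose (p - i) : R)) * (a i * b (p - i) * c (n - p)) := by
          rw [h3]
      _ = (n.choose i : R) * a i * (((n - i).choose (p - i) : R) * b (p - i) * c (n - p)) := by
          ring

instance : CommRing (HS R) :=
  { (inferInstance : AddCommGroup (HS R)) with
    mul := (· * ·)
    one := (1 : HS R)
    mul_assoc := hmul_assoc
    one_mul := hone_mul
    mul_one := fun a => by rw [hmul_comm]; exact hone_mul a
    left_distrib := fun a b c => by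
      funext n
      simp only [mul_apply, add_apply]
      rw [← Finset.sum_add_distrib]
      exact Finset.sum_congr rfl fun j _ => by ring
    right_distrib := fun a b c => by
      funext n
      simp only [mul_apply, add_apply]
      rw [← Finset.sum_add_distrib]
      exact Finset.sum_congr rfl fun j _ => by ring
    zero_mul := fun a => by funext n; simp [mul_apply]
    mul_zero := fun a => by funext n; simp [mul_apply]
    mul_comm := hmul_comm }

/-- The derivation `∂` on Hurwitz series: the left-shift. -/
def D (a : HS R) : HS R := fun n => a (n + 1)

@[simp] theorem D_apply (a : HS R) (n : ℕ) : D a n = a (n + 1) := rfl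

/-- The exponential `exp β = (1, β, β², …)`. -/
def hexp (b : R) : HS R := fun n => b ^ n

@[simp] theorem hexp_apply (b : R) (n : ℕ) : hexp b n = b ^ n := rfl

/-- The divided power `x^{[i]}`: the sequence with `1` in position `i` and `0` elsewhere. -/
def dpow (i : ℕ) : HS R := fun n => if n = i then 1 else 0

/-- The constant Hurwitz series `(r, 0, 0, …)`. -/
def const (r : R) : HS R := fun n => if n = 0 then r else 0

/-- Entrywise map of a Hurwitz series along a map of coefficients. -/
def map {K L : Type*} (f : K → L) (a : HS K) : HS L := fun n => f (a n)

/-- `σ` is a differential automorphism of the subspace `V` of `HS k`: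
a `k`-linear automorphism of `V` commuting with the derivation `D`. -/
def IsDiffAut {k : Type*} [Field k] (V : Submodule k (HS k)) (σ : V ≃ₗ[k] V) : Prop :=
  ∀ v w : V, (w : HS k) = D (v : HS k) → (σ w : HS k) = D (σ v : HS k)

end HS

/-- The nilpotent upper Jordan block of size `m` (ones on the superdiagonal). -/
def jordanBlock (k : Type*) [Field k] (m : ℕ) : Matrix (Fin m) (Fin m) k :=
  Matrix.of fun i j => if (i : ℕ) + 1 = (j : ℕ) then 1 else 0

/-- The centralizer of a matrix `A` inside `GL(m, k)`, as a set of matrices. -/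
def matCent {k : Type*} [Field k] {m : ℕ} (A : Matrix (Fin m) (Fin m) k) :
    Set (Matrix (Fin m) (Fin m) k) :=
  {T | IsUnit T ∧ A * T = T * A}

/-- The group `U(m, k)` of upper triangular matrices in `GL(m, k)` with all diagonal
entries equal to `1`, as a set of matrices. -/
def uniUpper (k : Type*) [Field k] (m : ℕ) : Set (Matrix (Fin m) (Fin m) k) :=
  {T | IsUnit T ∧ (∀ i, T i i = 1) ∧ ∀ i j : Fin m, (j : ℕ) < (i : ℕ) → T i j = 0}

private theorem d_iter_mul {R : Type*} [CommRing R] (d : Derivation ℤ R R) (a b : R) (n : ℕ) :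
    (⇑d)^[n] (a * b) =
      ∑ j ∈ Finset.range (n + 1), n.choose j • ((⇑d)^[j] a * (⇑d)^[n - j] b) := by
  induction n with
  | zero => simp
  | succ n IH =>
    rw [Function.iterate_succ_apply', IH, map_sum]
    have step : ∀ j ∈ Finset.range (n + 1), d (n.choose j • ((⇑d)^[j] a * (⇑d)^[n - j] b))
        = n.choose j • ((⇑d)^[j + 1] a * (⇑d)^[n - j] b)
          + n.choose j • ((⇑d)^[j] a * (⇑d)^[n - j + 1] b) := by
      intro j _
      rw [map_nsmul, d.leibniz, smul_eq_mul, smul_eq_mul, smul_add,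
        ← Function.iterate_succ_apply' d, ← Function.iterate_succ_apply' d,
        mul_comm ((⇑d)^[n - j] b), add_comm]
    rw [Finset.sum_congr rfl step, Finset.sum_add_distrib]
    rw [Finset.sum_range_succ'
      (fun j => (n + 1).choose j • ((⇑d)^[j] a * (⇑d)^[n + 1 - j] b)) (n + 1)]
    simp only [Nat.choose_succ_succ, Nat.succ_sub_succ, add_smul, Finset.sum_add_distrib,
      Nat.choose_zero_right, one_smul, Nat.sub_zero, Function.iterate_zero_apply]
    rw [Finset.sum_range_succ
      (fun j => n.choose (j + 1) • ((⇑d)^[j + 1] a * (⇑d)^[n - j] b)) n]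
    simp only [Nat.choose_succ_self, zero_smul, add_zero]
    rw [Finset.sum_range_succ'
      (fun j => n.choose j • ((⇑d)^[j] a * (⇑d)^[n - j + 1] b)) n]
    simp only [Nat.choose_zero_right, one_smul, Nat.sub_zero]
    have h1 : ∀ j ∈ Finset.range n,
        n.choose (j + 1) • ((⇑d)^[j + 1] a * (⇑d)^[n - (j + 1) + 1] b)
        = n.choose (j + 1) • ((⇑d)^[j + 1] a * (⇑d)^[n - j] b) := by
      intro j hj
      rw [Finset.mem_range] at hj
      have h2 : n - (j + 1) + 1 = n - j := by omega
      rw [h2]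
    rw [Finset.sum_congr rfl h1]
    abel

/-- For any differential ring `(R, d)`, any commutative ring `S`, and any ring
homomorphism `f : R → S`, the map `f̃(r) = (f r, f (d r), f (d² r), …)` is a (differential) ring
homomorphism `(R, d) → (HS S, ∂)` with `π₀ ∘ f̃ = f`, and it is the unique differential ring
homomorphism whose composition with `π₀` equals `f`. -/
theorem stmt_0 {R S : Type*} [CommRing R] [CommRing S]
    (d : Derivation ℤ R R) (f : R →+* S) :
    ∃ g : R →+* HS S,
      (∀ (r : R) (n : ℕ), g r n = f ((⇑d)^[n] r)) ∧
      (∀ r : R, g (d r) = HS.D (g r)) ∧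
      (∀ r : R, g r 0 = f r) ∧
      ∀ g' : R →+* HS S,
        ((∀ r : R, g' (d r) = HS.D (g' r)) ∧ ∀ r : R, g' r 0 = f r) → g' = g := by
  set g0 : R → HS S := fun r n => f ((⇑d)^[n] r) with hg0
  have hadd : ∀ a b : R, g0 (a + b) = g0 a + g0 b := by
    intro a b; funext n
    simp [hg0, HS.add_apply, iterate_map_add]; rfl
  have hmul : ∀ a b : R, g0 (a * b) = g0 a * g0 b := by
    intro a b; funext n
    rw [hg0]
    simp only [HS.mul_apply]
    rw [d_iter_mul d a b n, map_sum]
    refine Finset.sum_congr rfl fun j _ => ?_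
    simp [nsmul_eq_mul, mul_assoc]
  have hone : g0 1 = 1 := by
    funext n
    cases n with
    | zero => simp [hg0, HS.one_apply]
    | succ m =>
      have : (⇑d)^[m+1] (1 : R) = 0 := by
        rw [Function.iterate_succ_apply, d.map_one_eq_zero, iterate_map_zero]
      simp [hg0, HS.one_apply, this]
  refine ⟨{ toFun := g0, map_one' := hone, map_mul' := hmul,
            map_zero' := by funext n; simp [hg0, iterate_map_zero],
            map_add' := hadd }, fun r n => rfl, ?_, fun r => rfl, ?_⟩
  · intro r; funext n
    simp only [RingHom.coe_mk, MonoidHom.coe_mk, OneHom.coe_mk, HS.D_apply, hg0]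
    show f ((⇑d)^[n] (d r)) = f ((⇑d)^[n+1] r)
    rw [Function.iterate_succ_apply]
  · rintro g' ⟨hD, h0⟩
    ext r
    funext n
    show g' r n = g0 r n
    induction n generalizing r with
    | zero => exact h0 r
    | succ m ih =>
      have : g' r (m + 1) = g' (d r) m := by rw [hD r]; rfl
      rw [this, ih (d r)]
      simp [hg0, Function.iterate_succ_apply]
end

section
/- Let k be a field, let α ∈ k, and let V = {c·exp(α) : c ∈ k} ⊆ Hk, which is the full set of solutions in Hk of ∂(y) = α·y. Then for each σ ∈ G(V|k) there is a unique c_σ ∈ k* with σ(exp(α)) = c_σ·exp(α), and the map σ ↦ c_σ is a group isomorphism from G(V|k) onto the multiplicative group (k*, ×). -/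
open scoped BigOperators

set_option linter.unusedSectionVars false

/-- for `V = {c • exp α | c ∈ k}`, the full solution set of `∂y = α•y`,
every differential automorphism `σ` of `V` satisfies `σ(exp α) = c_σ • exp α` for a unique
`c_σ ∈ kˣ`, and `σ ↦ c_σ` is a group isomorphism `G(V|k) ≅ (kˣ, ×)`. -/
theorem stmt_6 {k : Type*} [Field k] (α : k)
    (V : Submodule k (HS k)) (hV : V = Submodule.span k {HS.hexp α})
    (hmem : HS.hexp α ∈ V) :
    (V : Set (HS k)) = {y : HS k | HS.D y = α • y} ∧
    (∀ σ : {σ : V ≃ₗ[k] V // HS.IsDiffAut V σ},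
      ∃! c : kˣ, ((σ.1 ⟨HS.hexp α, hmem⟩ : V) : HS k) = (c : k) • HS.hexp α) ∧
    ∃ C : {σ : V ≃ₗ[k] V // HS.IsDiffAut V σ} → kˣ,
      (∀ σ, ((σ.1 ⟨HS.hexp α, hmem⟩ : V) : HS k) = (C σ : k) • HS.hexp α) ∧
      Function.Bijective C ∧
      ∀ σ τ ρ : {σ : V ≃ₗ[k] V // HS.IsDiffAut V σ},
        (∀ v : V, ρ.1 v = σ.1 (τ.1 v)) → C ρ = C σ * C τ := by
  classical
  have hene : HS.hexp α ≠ 0 := fun h => by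
    have := congrFun h 0
    simp [HS.hexp] at this
  have hspan : ∀ v : V, ∃ c : k, (v : HS k) = c • HS.hexp α := by
    intro v
    have hv : (v : HS k) ∈ Submodule.span k {HS.hexp α} := by rw [← hV]; exact v.2
    rw [Submodule.mem_span_singleton] at hv
    obtain ⟨c, hc⟩ := hv
    exact ⟨c, hc.symm⟩
  set E : V := ⟨HS.hexp α, hmem⟩ with hE
  have hval : ∀ v : V, (v : HS k) = ((v : HS k) 0) • HS.hexp α := by
    intro v
    obtain ⟨c, hc⟩ := hspan v
    have h0 : (v : HS k) 0 = c := by rw [hc]; simp [HS.hexp]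
    rw [h0]; exact hc
  have hvE : ∀ v : V, v = ((v : HS k) 0) • E := by
    intro v
    apply Subtype.ext
    simpa [hE] using hval v
  have part1 : (V : Set (HS k)) = {y : HS k | HS.D y = α • y} := by
    ext y
    constructor
    · intro hy
      obtain ⟨c, hc⟩ := hspan ⟨y, hy⟩
      simp only at hc
      show HS.D y = α • y
      rw [hc]
      funext n
      simp [HS.D, HS.hexp, pow_succ]
      ring
    · intro hy
      have hy' : HS.D y = α • y := hy
      have hrep : y = (y 0) • HS.hexp α := by
        funext n
        induction n with
        | zero => simp [HS.hexp]
        | succ n ih =>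
          have hn := congrFun hy' n
          simp only [HS.D_apply, HS.smul_apply, smul_eq_mul] at hn
          rw [hn, ih]
          simp [HS.hexp, pow_succ]
          ring
      show y ∈ V
      rw [hrep, hV]
      exact Submodule.smul_mem _ _ (Submodule.mem_span_singleton_self _)
  have hne : ∀ σ : {σ : V ≃ₗ[k] V // HS.IsDiffAut V σ}, ((σ.1 E : V) : HS k) 0 ≠ 0 := by
    intro σ h
    have h1 : σ.1 E = 0 := by
      have h2 := hvE (σ.1 E)
      rw [h, zero_smul] at h2
      exact h2
    have h3 : E = 0 := σ.1.injective (by rw [h1]; exact (map_zero (σ.1 : V →ₗ[k] V)).symm)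
    apply hene
    have h4 := congrArg (Subtype.val) h3
    simpa [hE] using h4
  let C : {σ : V ≃ₗ[k] V // HS.IsDiffAut V σ} → kˣ :=
    fun σ => Units.mk0 (((σ.1 E : V) : HS k) 0) (hne σ)
  have hC : ∀ σ, ((σ.1 E : V) : HS k) = (C σ : k) • HS.hexp α := fun σ => hval _
  have hCE : ∀ σ, σ.1 E = (C σ : k) • E := fun σ => hvE _
  refine ⟨part1, ?_, C, hC, ⟨?_, ?_⟩, ?_⟩
  · intro σ
    refine ⟨C σ, hC σ, ?_⟩
    intro c' hc'
    apply Units.ext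
    have := congrFun hc' 0
    simp [HS.hexp] at this
    simp [C, this]
  · -- injective
    intro σ τ h
    apply Subtype.ext
    apply LinearEquiv.toLinearMap_injective
    apply LinearMap.ext
    intro v
    have hv := hvE v
    show σ.1 v = τ.1 v
    rw [hv, map_smul, map_smul, hCE σ, hCE τ, h]
  · -- surjective
    intro c
    have hD : HS.IsDiffAut V (LinearEquiv.smulOfUnit (M := V) c) := by
      intro v w hw
      show (((c : k) • w : V) : HS k) = HS.D (((c : k) • v : V) : HS k)
      push_cast [Submodule.coe_smul]
      funext n
      simp [HS.D, hw]
    refine ⟨⟨LinearEquiv.smulOfUnit c, hD⟩, ?_⟩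
    apply Units.ext
    show ((((c : k) • E : V) : HS k) 0) = (c : k)
    simp [hE, HS.hexp]
  · intro σ τ ρ h
    apply Units.ext
    show ((ρ.1 E : V) : HS k) 0 = (C σ : k) * (C τ : k)
    rw [h E, hCE τ, map_smul, hCE σ]
    simp [HS.hexp]
    simp [hE, HS.hexp]
    ring
end

section
/- Let k be a field, let α_1, …, α_r ∈ k be distinct, let m_1, …, m_r ∈ ℕ, let z_{j,t} = x^{[j]}·exp(α_t) ∈ Hk for 0 ≤ j ≤ m_t, let V_t = Span_k{z_{j,t} : 0 ≤ j ≤ m_t}, and let V = V_1 + ⋯ + V_r. Then the sum is direct, V = ⊕_{t=1}^{r} V_t, and restriction induces a group isomorphism G(V|k) ≅ ⊕_{t=1}^{r} G(V_t|k). -/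
open scoped BigOperators

set_option linter.unusedSectionVars false

section Stmt11Aux

open Finset

variable {k : Type*} [Field k]

theorem HS.sum_apply' {ι : Type*} (s : Finset ι) (f : ι → HS k) (n : ℕ) :
    (∑ i ∈ s, f i) n = ∑ i ∈ s, f i n := by
  induction s using Finset.cons_induction with
  | empty => rfl
  | cons a s ha ih => rw [Finset.sum_cons, Finset.sum_cons, HS.add_apply, ih]

theorem HS.D_sum {ι : Type*} (s : Finset ι) (f : ι → HS k) :
    HS.D (∑ i ∈ s, f i) = ∑ i ∈ s, HS.D (f i) := by
  induction s using Finset.cons_induction with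
  | empty => rfl
  | cons a s ha ih => rw [Finset.sum_cons, Finset.sum_cons, ← ih]; rfl

/-- Derivation as a linear map. -/
def Dlin (k : Type*) [Field k] : HS k →ₗ[k] HS k where
  toFun := HS.D
  map_add' _ _ := rfl
  map_smul' _ _ := rfl

/-- The operator `D - γ`. -/
def Lop (γ : k) : Module.End k (HS k) := Dlin k - γ • LinearMap.id

theorem Lop_apply (γ : k) (a : HS k) : Lop γ a = HS.D a - γ • a := rfl

/-- `Zf β j` is the sequence `n ↦ C(n,j) β^(n-j)`, i.e. `x^[j] * exp β`. -/
def Zf (β : k) (j : ℕ) : HS k := fun n => (n.choose j : k) * β ^ (n - j)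

theorem Zf_apply (β : k) (j n : ℕ) : Zf β j n = (n.choose j : k) * β ^ (n - j) := rfl

theorem dpow_mul_hexp (β : k) (j : ℕ) : (HS.dpow j : HS k) * HS.hexp β = Zf β j := by
  funext n
  rw [HS.mul_apply]
  have hterm : ∀ i, (n.choose i : k) * HS.dpow j i * HS.hexp β (n - i)
      = if i = j then (n.choose j : k) * β ^ (n - j) else 0 := by
    intro i
    by_cases h : i = j
    · subst h; simp [HS.dpow, HS.hexp]
    · simp [HS.dpow, HS.hexp, h]
  simp_rw [hterm]
  rw [Finset.sum_ite_eq' (Finset.range (n+1)) j fun _ => (n.choose j : k) * β ^ (n - j)]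
  by_cases h : j ∈ Finset.range (n+1)
  · rw [if_pos h]; rfl
  · rw [if_neg h, Zf_apply, Nat.choose_eq_zero_of_lt (by simpa using h), Nat.cast_zero, zero_mul]

theorem D_Zf_zero (β : k) : HS.D (Zf β 0) = β • Zf β 0 := by
  funext n
  show ((n+1).choose 0 : k) * β ^ (n + 1 - 0) = β • ((n.choose 0 : k) * β ^ (n - 0))
  simp [pow_succ, smul_eq_mul]; ring

theorem D_Zf_succ (β : k) (j : ℕ) : HS.D (Zf β (j+1)) = Zf β j + β • Zf β (j+1) := by
  funext n
  show ((n+1).choose (j+1) : k) * β ^ (n + 1 - (j+1))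
      = (n.choose j : k) * β ^ (n - j) + β • ((n.choose (j+1) : k) * β ^ (n - (j+1)))
  rw [smul_eq_mul]
  rcases lt_trichotomy n j with h | rfl | h
  · rw [Nat.choose_eq_zero_of_lt (by omega), Nat.choose_eq_zero_of_lt (by omega),
      Nat.choose_eq_zero_of_lt (by omega)]
    simp
  · rw [Nat.choose_self, Nat.choose_self, Nat.choose_eq_zero_of_lt (by omega)]
    simp
  · have h1 : n + 1 - (j+1) = n - j := by omega
    have h2 : n - j = (n - (j+1)) + 1 := by omega
    rw [h1, Nat.choose_succ_succ' n j, h2, pow_succ]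
    push_cast
    ring

theorem Lop_Zf_zero (γ β : k) : Lop γ (Zf β 0) = (β - γ) • Zf β 0 := by
  rw [Lop_apply, D_Zf_zero, sub_smul]

theorem Lop_Zf_succ (γ β : k) (j : ℕ) :
    Lop γ (Zf β (j+1)) = Zf β j + (β - γ) • Zf β (j+1) := by
  rw [Lop_apply, D_Zf_succ, sub_smul, add_sub_assoc]

theorem Zf_indep (β : k) (M : ℕ) (c : ℕ → k)
    (h : ∑ j ∈ range (M+1), c j • Zf β j = 0) : ∀ j, j ≤ M → c j = 0 := by
  intro j
  induction j using Nat.strong_induction_on with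
  | _ j ih =>
    intro hj
    have hn : (∑ i ∈ range (M+1), c i • Zf β i) j = 0 := by rw [h]; rfl
    rw [HS.sum_apply'] at hn
    have hsingle : ∑ i ∈ range (M+1), (c i • Zf β i) j = (c j • Zf β j) j := by
      apply Finset.sum_eq_single
      · intro i hi hij
        rcases lt_or_gt_of_ne hij with hlt | hgt
        · rw [ih i hlt (by omega), HS.smul_apply, zero_smul]
        · rw [HS.smul_apply, Zf_apply, Nat.choose_eq_zero_of_lt hgt, Nat.cast_zero, zero_mul,
            smul_zero]
      · intro hji; exact absurd (Finset.mem_range.mpr (by omega)) hji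
    rw [hsingle, HS.smul_apply, Zf_apply, Nat.choose_self, Nat.sub_self, pow_zero,
      Nat.cast_one, one_mul, smul_eq_mul, mul_one] at hn
    exact hn

/-- shifted family: `Zprev β 0 = 0`, `Zprev β (j+1) = Zf β j`. -/
def Zprev (β : k) : ℕ → HS k
  | 0 => 0
  | (i+1) => Zf β i

theorem Lop_sum (γ β : k) (M : ℕ) (c : ℕ → k) (hc : c (M+1) = 0) :
    Lop γ (∑ j ∈ range (M+1), c j • Zf β j)
      = ∑ j ∈ range (M+1), ((β - γ) * c j + c (j+1)) • Zf β j := by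
  rw [map_sum]
  have hterm : ∀ j, Lop γ (c j • Zf β j)
      = ((β - γ) * c j) • Zf β j + c j • Zprev β j := by
    intro j
    rw [map_smul]
    cases j with
    | zero => rw [Lop_Zf_zero, smul_smul, mul_comm]; simp [Zprev]
    | succ i =>
        rw [Lop_Zf_succ, smul_add, smul_smul, mul_comm, add_comm]
        rfl
  simp_rw [hterm]
  rw [Finset.sum_add_distrib]
  have h2 : ∑ j ∈ range (M+1), c j • Zprev β j
      = ∑ j ∈ range (M+1), c (j+1) • Zf β j := by
    rw [Finset.sum_range_succ' (fun j => c j • Zprev β j) M]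
    have e0 : c 0 • Zprev β 0 = 0 := smul_zero _
    have e1 : ∀ i, c (i+1) • Zprev β (i+1) = c (i+1) • Zf β i := fun i => rfl
    simp_rw [e0, e1, add_zero]
    rw [Finset.sum_range_succ (fun j => c (j+1) • Zf β j) M, hc, zero_smul, add_zero]
  rw [h2, ← Finset.sum_add_distrib]
  exact Finset.sum_congr rfl fun j _ => by rw [add_smul]

theorem Lop_inj_coeff {γ β : k} (hne : γ ≠ β) (M : ℕ) (c : ℕ → k) (hc : c (M+1) = 0)
    (h : Lop γ (∑ j ∈ range (M+1), c j • Zf β j) = 0) : ∀ j, j ≤ M + 1 → c j = 0 := by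
  have hd : ∀ j, j ≤ M → (β - γ) * c j + c (j+1) = 0 := by
    intro j hj
    exact Zf_indep β M _ (by rw [← Lop_sum γ β M c hc, h]) j hj
  have hβγ : β - γ ≠ 0 := sub_ne_zero.mpr (Ne.symm hne)
  have key : ∀ i, c (M+1-i) = 0 := by
    intro i
    induction i with
    | zero => simpa using hc
    | succ i ih =>
      rcases le_or_gt (i+1) (M+1) with h1 | h1
      · have hj : M + 1 - (i+1) ≤ M := by omega
        have hdj := hd (M+1-(i+1)) hj
        have h2 : M + 1 - (i+1) + 1 = M + 1 - i := by omega
        rw [h2, ih, add_zero, mul_eq_zero] at hdj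
        exact hdj.resolve_left hβγ
      · have h2 : M + 1 - (i+1) = M + 1 - i := by omega
        rw [h2]; exact ih
  intro j hj
  have := key (M+1-j)
  rwa [Nat.sub_sub_self hj] at this

/-- The span of `Zf β 0, …, Zf β M`. -/
def Sp (β : k) (M : ℕ) : Submodule k (HS k) :=
  Submodule.span k (Set.range fun j : Fin (M+1) => Zf β (j : ℕ))

theorem mem_Sp_iff {β : k} {M : ℕ} {v : HS k} :
    v ∈ Sp β M ↔ ∃ c : ℕ → k, (∀ j, M < j → c j = 0) ∧
      v = ∑ j ∈ range (M+1), c j • Zf β j := by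
  constructor
  · intro hv
    obtain ⟨c, hc⟩ := (Submodule.mem_span_range_iff_exists_fun k).mp hv
    refine ⟨fun j => if h : j < M+1 then c ⟨j, h⟩ else 0, fun j hj => dif_neg (by omega), ?_⟩
    rw [← hc, ← Fin.sum_univ_eq_sum_range (fun j => (if h : j < M+1 then c ⟨j, h⟩ else 0) • Zf β j) (M+1)]
    exact Finset.sum_congr rfl fun j _ => by rw [dif_pos j.isLt]
  · rintro ⟨c, hc0, rfl⟩
    exact Submodule.sum_mem _ fun j hj =>
      Submodule.smul_mem _ _ (Submodule.subset_span ⟨⟨j, Finset.mem_range.mp hj⟩, rfl⟩)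

theorem Lop_mem_Sp (γ : k) {β : k} {M : ℕ} {v : HS k} (hv : v ∈ Sp β M) :
    Lop γ v ∈ Sp β M := by
  obtain ⟨c, hc0, rfl⟩ := mem_Sp_iff.mp hv
  rw [Lop_sum γ β M c (hc0 _ (by omega))]
  exact mem_Sp_iff.mpr ⟨_, fun j hj => by
    rw [hc0 j hj, hc0 (j+1) (by omega), mul_zero, add_zero], rfl⟩

theorem Lop_pow_mem_Sp (γ : k) (n : ℕ) {β : k} {M : ℕ} {v : HS k} (hv : v ∈ Sp β M) :
    ((Lop γ)^n) v ∈ Sp β M := by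
  induction n generalizing v with
  | zero => simpa using hv
  | succ n ih =>
    rw [pow_succ, Module.End.mul_apply]
    exact ih (Lop_mem_Sp γ hv)

theorem Lop_pow_Zf_self (β : k) (j : ℕ) : ((Lop β)^(j+1)) (Zf β j) = 0 := by
  induction j with
  | zero => rw [pow_one, Lop_Zf_zero, sub_self, zero_smul]
  | succ j ih =>
    rw [pow_succ, Module.End.mul_apply, Lop_Zf_succ, sub_self, zero_smul, add_zero, ih]

theorem Lop_pow_kill (β : k) (M : ℕ) {v : HS k} (hv : v ∈ Sp β M) :
    ((Lop β)^(M+1)) v = 0 := by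
  have hker : Sp β M ≤ LinearMap.ker ((Lop β)^(M+1)) := by
    rw [Sp, Submodule.span_le]
    rintro _ ⟨j, rfl⟩
    simp only [SetLike.mem_coe, LinearMap.mem_ker]
    have heq : (Lop β)^(M+1) = (Lop β)^(M - (j : ℕ)) * (Lop β)^((j : ℕ)+1) := by
      rw [← pow_add]
      congr 1
      have := j.isLt; omega
    rw [heq, Module.End.mul_apply, Lop_pow_Zf_self, map_zero]
  exact LinearMap.mem_ker.mp (hker hv)

theorem Lop_inj_Sp {γ β : k} (hne : γ ≠ β) {M : ℕ} {v : HS k} (hv : v ∈ Sp β M)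
    (h : Lop γ v = 0) : v = 0 := by
  obtain ⟨c, hc0, rfl⟩ := mem_Sp_iff.mp hv
  have := Lop_inj_coeff hne M c (hc0 _ (by omega)) h
  exact Finset.sum_eq_zero fun j hj => by
    rw [this j (by have := Finset.mem_range.mp hj; omega), zero_smul]

theorem Lop_pow_inj_Sp {γ β : k} (hne : γ ≠ β) (n : ℕ) {M : ℕ} {v : HS k} (hv : v ∈ Sp β M)
    (h : ((Lop γ)^n) v = 0) : v = 0 := by
  induction n generalizing v with
  | zero => simpa using h
  | succ n ih =>
    rw [pow_succ, Module.End.mul_apply] at h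
    exact Lop_inj_Sp hne hv (ih (Lop_mem_Sp γ hv) h)

theorem HS.sub_apply' (a b : HS k) (n : ℕ) : (a - b) n = a n - b n := rfl

theorem Lop_commute (γ δ : k) : Commute (Lop γ) (Lop δ) := by
  apply LinearMap.ext
  intro a
  funext n
  show Lop γ (Lop δ a) n = Lop δ (Lop γ a) n
  simp only [Lop_apply, HS.sub_apply', HS.smul_apply, HS.D_apply, smul_eq_mul]
  ring

/-- The composite operator `∏_{s ∈ F} (D - γ s)^(nn s)`. -/
def prodL {r : ℕ} (γ : Fin r → k) (nn : Fin r → ℕ) (F : Finset (Fin r)) :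
    Module.End k (HS k) :=
  F.noncommProd (fun s => (Lop (γ s))^(nn s))
    (fun a _ b _ _ => (Lop_commute (γ a) (γ b)).pow_pow _ _)

theorem prodL_cons {r : ℕ} (γ : Fin r → k) (nn : Fin r → ℕ) (a : Fin r) (F : Finset (Fin r))
    (ha : a ∉ F) :
    prodL γ nn (Finset.cons a F ha) = (Lop (γ a))^(nn a) * prodL γ nn F :=
  Finset.noncommProd_cons F a _ ha _

theorem prodL_mem_Sp {r : ℕ} (γ : Fin r → k) (nn : Fin r → ℕ) (F : Finset (Fin r))
    {β : k} {M : ℕ} {v : HS k} (hv : v ∈ Sp β M) :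
    prodL γ nn F v ∈ Sp β M := by
  induction F using Finset.cons_induction with
  | empty => rw [show prodL γ nn ∅ = 1 from Finset.noncommProd_empty _ _]; simpa using hv
  | cons a F ha ih =>
    rw [prodL_cons, Module.End.mul_apply]
    exact Lop_pow_mem_Sp (γ a) (nn a) ih

theorem prodL_kill {r : ℕ} (γ : Fin r → k) (nn : Fin r → ℕ) (F : Finset (Fin r)) {s : Fin r}
    (hs : s ∈ F) {v : HS k} (hv : v ∈ Sp (γ s) (nn s)) :
    prodL γ (fun x => nn x + 1) F v = 0 := by
  induction F using Finset.cons_induction with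
  | empty => exact absurd hs (Finset.notMem_empty s)
  | cons a F ha ih =>
    rw [prodL_cons, Module.End.mul_apply]
    rcases Finset.mem_cons.mp hs with rfl | hs'
    · exact Lop_pow_kill (γ s) (nn s) (prodL_mem_Sp γ (fun x => nn x + 1) F hv)
    · rw [ih hs', map_zero]

theorem prodL_inj {r : ℕ} (γ : Fin r → k) (nn : Fin r → ℕ) (F : Finset (Fin r))
    {β : k} {M : ℕ} (hne : ∀ s ∈ F, γ s ≠ β) {v : HS k} (hv : v ∈ Sp β M)
    (h : prodL γ nn F v = 0) : v = 0 := by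
  induction F using Finset.cons_induction with
  | empty => rw [show prodL γ nn ∅ = 1 from Finset.noncommProd_empty _ _] at h; simpa using h
  | cons a F ha ih =>
    rw [prodL_cons, Module.End.mul_apply] at h
    have h1 : prodL γ nn F v = 0 :=
      Lop_pow_inj_Sp (hne a (Finset.mem_cons_self a F)) (nn a)
        (prodL_mem_Sp γ nn F hv) h
    exact ih (fun s hs => hne s (Finset.mem_cons_of_mem hs)) h1

/-- Restriction of a linear automorphism of `V` to a subspace `Wt ≤ V` preserved by
both the map and its inverse. -/
def restr (V Wt : Submodule k (HS k)) (hle : Wt ≤ V) (σ : V ≃ₗ[k] V)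
    (h1 : ∀ v : V, (v : HS k) ∈ Wt → (σ v : HS k) ∈ Wt)
    (h2 : ∀ v : V, (v : HS k) ∈ Wt → (σ.symm v : HS k) ∈ Wt) : Wt ≃ₗ[k] Wt where
  toFun v := ⟨(σ ⟨(v : HS k), hle v.2⟩ : HS k), h1 _ v.2⟩
  map_add' v w := Subtype.ext (by
    have h : (⟨((v + w : Wt) : HS k), hle (v+w).2⟩ : V)
        = ⟨(v : HS k), hle v.2⟩ + ⟨(w : HS k), hle w.2⟩ := Subtype.ext rfl
    show (σ ⟨((v + w : Wt) : HS k), hle (v+w).2⟩ : HS k) = _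
    rw [h, map_add]
    rfl)
  map_smul' a v := Subtype.ext (by
    have h : (⟨((a • v : Wt) : HS k), hle (a • v).2⟩ : V)
        = a • ⟨(v : HS k), hle v.2⟩ := Subtype.ext rfl
    show (σ ⟨((a • v : Wt) : HS k), hle (a • v).2⟩ : HS k) = _
    rw [h, map_smul]
    rfl)
  invFun v := ⟨(σ.symm ⟨(v : HS k), hle v.2⟩ : HS k), h2 _ v.2⟩
  left_inv v := Subtype.ext (by
    have h : (⟨(σ ⟨(v : HS k), hle v.2⟩ : HS k), hle (h1 _ v.2)⟩ : V)
        = σ ⟨(v : HS k), hle v.2⟩ := Subtype.ext rfl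
    show (σ.symm ⟨(σ ⟨(v : HS k), hle v.2⟩ : HS k), hle (h1 _ v.2)⟩ : HS k) = (v : HS k)
    rw [h, LinearEquiv.symm_apply_apply])
  right_inv v := Subtype.ext (by
    have h : (⟨(σ.symm ⟨(v : HS k), hle v.2⟩ : HS k), hle (h2 _ v.2)⟩ : V)
        = σ.symm ⟨(v : HS k), hle v.2⟩ := Subtype.ext rfl
    show (σ ⟨(σ.symm ⟨(v : HS k), hle v.2⟩ : HS k), hle (h2 _ v.2)⟩ : HS k) = (v : HS k)
    rw [h, LinearEquiv.apply_symm_apply])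

end Stmt11Aux
/-- for distinct `α₁, …, α_r` and `V_t = Span_k{x^{[j]} exp α_t | j ≤ m_t}`,
the sum `V = V₁ + ⋯ + V_r` is direct and restriction induces a group isomorphism
`G(V|k) ≅ ⊕_t G(V_t|k)`. -/
theorem stmt_11 {k : Type*} [Field k] (r : ℕ) (α : Fin r → k) (hα : Function.Injective α)
    (m : Fin r → ℕ)
    (z : (t : Fin r) → Fin (m t + 1) → HS k)
    (hz : ∀ t j, z t j = HS.dpow (j : ℕ) * HS.hexp (α t))
    (W : Fin r → Submodule k (HS k)) (hW : ∀ t, W t = Submodule.span k (Set.range (z t)))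
    (V : Submodule k (HS k)) (hV : V = ⨆ t, W t) (hWV : ∀ t, W t ≤ V) :
    (∀ f : Fin r → HS k, (∀ t, f t ∈ W t) → ∑ t, f t = 0 → ∀ t, f t = 0) ∧
    ∃ E : {σ : V ≃ₗ[k] V // HS.IsDiffAut V σ} →
        ∀ t : Fin r, {σ : W t ≃ₗ[k] W t // HS.IsDiffAut (W t) σ},
      (∀ σ t (v : W t),
        (((E σ t).1 v : W t) : HS k) = ((σ.1 ⟨(v : HS k), hWV t v.2⟩ : V) : HS k)) ∧
      Function.Bijective E ∧
      ∀ σ τ ρ, (∀ v : V, ρ.1 v = σ.1 (τ.1 v)) →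
        ∀ t (v : W t), (E ρ t).1 v = (E σ t).1 ((E τ t).1 v) := by
  classical
  have hzZ : ∀ t, z t = fun j : Fin (m t + 1) => Zf (α t) (j : ℕ) := by
    intro t; funext j; rw [hz, dpow_mul_hexp]
  have hWS : ∀ t, W t = Sp (α t) (m t) := by
    intro t; rw [hW, hzZ t]; rfl
  -- PART 1 : directness
  have hdirect : ∀ f : Fin r → HS k, (∀ t, f t ∈ W t) → ∑ t, f t = 0 → ∀ t, f t = 0 := by
    intro f hf hsum t
    have hfS : ∀ s, f s ∈ Sp (α s) (m s) := by
      intro s; have := hf s; rwa [hWS s] at this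
    have h0 : prodL α (fun s => m s + 1) (Finset.univ.erase t) (∑ s, f s) = 0 := by
      rw [hsum, map_zero]
    rw [map_sum] at h0
    have h1 : ∀ s ∈ Finset.univ, s ≠ t →
        prodL α (fun s => m s + 1) (Finset.univ.erase t) (f s) = 0 := fun s _ hst =>
      prodL_kill α m _ (Finset.mem_erase.mpr ⟨hst, Finset.mem_univ s⟩) (hfS s)
    rw [Finset.sum_eq_single t h1 (fun ht => absurd (Finset.mem_univ t) ht)] at h0
    exact prodL_inj α (fun s => m s + 1) _
      (fun s hs hc => (Finset.mem_erase.mp hs).1 (hα hc)) (hfS t) h0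
  refine ⟨hdirect, ?_⟩
  -- basic membership facts
  have hgen : ∀ p : Σ t : Fin r, Fin (m t + 1), Zf (α p.1) (p.2 : ℕ) ∈ W p.1 := by
    intro p; rw [hWS]; exact Submodule.subset_span ⟨p.2, rfl⟩
  have hsubsum : ∀ (U : Submodule k (HS k)) {ι : Type} (s : Finset ι) (f : ι → U),
      ((∑ i ∈ s, f i : U) : HS k) = ∑ i ∈ s, ((f i : HS k)) := fun U _ s f =>
    map_sum U.subtype f s
  have hcoeW : ∀ t (v : HS k), v ∈ W t →
      ∃ c : Fin (m t + 1) → k, v = ∑ j, c j • Zf (α t) (j : ℕ) := by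
    intro t v hv
    rw [hWS] at hv
    obtain ⟨c, hc⟩ := (Submodule.mem_span_range_iff_exists_fun k).mp hv
    exact ⟨c, hc.symm⟩
  have hVspan : ∀ v : HS k, v ∈ V →
      ∃ c : (Σ t : Fin r, Fin (m t + 1)) → k, v = ∑ p, c p • Zf (α p.1) (p.2 : ℕ) := by
    intro v hv
    have hVs : V = Submodule.span k
        (Set.range fun p : (Σ t : Fin r, Fin (m t + 1)) => Zf (α p.1) (p.2 : ℕ)) := by
      rw [hV]
      have hru : (Set.range fun p : (Σ t : Fin r, Fin (m t + 1)) => Zf (α p.1) (p.2 : ℕ))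
          = ⋃ t, Set.range fun j : Fin (m t + 1) => Zf (α t) (j : ℕ) := by
        ext x
        constructor
        · rintro ⟨⟨t, j⟩, rfl⟩
          exact Set.mem_iUnion.mpr ⟨t, ⟨j, rfl⟩⟩
        · intro hx
          rcases Set.mem_iUnion.mp hx with ⟨t, ⟨j, rfl⟩⟩
          exact ⟨⟨t, j⟩, rfl⟩
      rw [hru, Submodule.span_iUnion]
      exact iSup_congr fun t => by rw [hWS t]; rfl
    rw [hVs] at hv
    obtain ⟨c, hc⟩ := (Submodule.mem_span_range_iff_exists_fun k).mp hv
    exact ⟨c, hc.symm⟩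
  have hsig : ∀ (f : (Σ t : Fin r, Fin (m t + 1)) → HS k),
      ∑ p, f p = ∑ t, ∑ j, f ⟨t, j⟩ := by
    intro f
    rw [← Finset.univ_sigma_univ, Finset.sum_sigma]
  -- D-stability
  have hDWmem : ∀ t (v : HS k), v ∈ W t → HS.D v ∈ W t := by
    intro t v hv
    rw [hWS] at hv ⊢
    have hD : HS.D v = Lop (0 : k) v := by rw [Lop_apply, zero_smul, sub_zero]
    rw [hD]
    exact Lop_mem_Sp (0 : k) hv
  have hDVmem : ∀ v : HS k, v ∈ V → HS.D v ∈ V := by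
    intro v hv
    obtain ⟨c, rfl⟩ := hVspan v hv
    have hDsum : HS.D (∑ p, c p • Zf (α p.1) (p.2 : ℕ))
        = ∑ p, c p • HS.D (Zf (α p.1) (p.2 : ℕ)) := by
      rw [HS.D_sum]
      exact Finset.sum_congr rfl fun p _ => rfl
    rw [hDsum]
    exact Submodule.sum_mem _ fun p _ => Submodule.smul_mem _ _
      (hWV p.1 (hDWmem p.1 _ (hgen p)))
  have hLopV : ∀ (γ : k) (v : HS k), v ∈ V → Lop γ v ∈ V := by
    intro γ v hv
    rw [Lop_apply]
    exact sub_mem (hDVmem v hv) (Submodule.smul_mem _ _ hv)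
  have hLopPowV : ∀ (γ : k) (n : ℕ) (v : HS k), v ∈ V → ((Lop γ)^n) v ∈ V := by
    intro γ n
    induction n with
    | zero => intro v hv; simpa using hv
    | succ n ih =>
      intro v hv
      rw [pow_succ, Module.End.mul_apply]
      exact ih _ (hLopV γ v hv)
  -- kernel characterization of W t inside V
  have hkill : ∀ t (v : HS k), v ∈ W t → ((Lop (α t))^(m t + 1)) v = 0 := by
    intro t v hv
    rw [hWS] at hv
    exact Lop_pow_kill _ _ hv
  have hker : ∀ t (v : HS k), v ∈ V → ((Lop (α t))^(m t + 1)) v = 0 → v ∈ W t := by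
    intro t v hv h0
    obtain ⟨c, rfl⟩ := hVspan v hv
    have hgW : ∀ s, (∑ j, c ⟨s, j⟩ • Zf (α s) (j : ℕ)) ∈ W s := by
      intro s
      rw [hWS]
      exact Submodule.sum_mem _ fun j _ => Submodule.smul_mem _ _
        (Submodule.subset_span ⟨j, rfl⟩)
    have hvg : ∑ p, c p • Zf (α p.1) (p.2 : ℕ)
        = ∑ s, ∑ j, c ⟨s, j⟩ • Zf (α s) (j : ℕ) := hsig _
    have h1 : ∑ s, ((Lop (α t))^(m t + 1)) (∑ j, c ⟨s, j⟩ • Zf (α s) (j : ℕ)) = 0 := by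
      rw [← map_sum, ← hvg, h0]
    have h2 := hdirect _ (fun s => by
      rw [hWS]
      refine Lop_pow_mem_Sp _ _ ?_
      have := hgW s; rwa [hWS s] at this) h1
    have h3 : ∀ s, s ≠ t → (∑ j, c ⟨s, j⟩ • Zf (α s) (j : ℕ)) = 0 := by
      intro s hst
      refine Lop_pow_inj_Sp (β := α s) (M := m s) (fun hc => hst ((hα hc).symm)) (m t + 1) ?_ (h2 s)
      have := hgW s; rwa [hWS s] at this
    have h4 : ∑ s, ∑ j, c ⟨s, j⟩ • Zf (α s) (j : ℕ) = ∑ j, c ⟨t, j⟩ • Zf (α t) (j : ℕ) :=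
      Finset.sum_eq_single t (fun s _ hst => h3 s hst)
        (fun ht => absurd (Finset.mem_univ t) ht)
    rw [hvg, h4]
    exact hgW t
  -- commutation of diff auts with Lop
  have hcommD : ∀ (σ : V ≃ₗ[k] V), HS.IsDiffAut V σ → ∀ (v : V),
      ((σ ⟨HS.D ↑v, hDVmem _ v.2⟩ : V) : HS k) = HS.D ↑(σ v) := fun σ hσ v =>
    hσ v ⟨HS.D ↑v, hDVmem _ v.2⟩ rfl
  have hcommL : ∀ (σ : V ≃ₗ[k] V), HS.IsDiffAut V σ → ∀ (γ : k) (v : V),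
      ((σ ⟨Lop γ ↑v, hLopV γ _ v.2⟩ : V) : HS k) = Lop γ ↑(σ v) := by
    intro σ hσ γ v
    have h1 : (⟨Lop γ ↑v, hLopV γ _ v.2⟩ : V) = ⟨HS.D ↑v, hDVmem _ v.2⟩ - γ • v :=
      Subtype.ext (by
        show Lop γ ↑v = ↑((⟨HS.D ↑v, hDVmem _ v.2⟩ : V) - γ • v)
        rw [Lop_apply]; rfl)
    have hmapsub : ∀ x y : V, σ (x - y) = σ x - σ y := fun x y =>
      map_sub (σ.toLinearMap) x y
    have hmapsmul : ∀ (a : k) (x : V), σ (a • x) = a • σ x := fun a x =>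
      map_smul (σ.toLinearMap) a x
    calc ((σ ⟨Lop γ ↑v, hLopV γ _ v.2⟩ : V) : HS k)
        = ↑(σ ⟨HS.D ↑v, hDVmem _ v.2⟩ - γ • σ v) := by rw [h1, hmapsub, hmapsmul]
      _ = ↑(σ ⟨HS.D ↑v, hDVmem _ v.2⟩) - γ • (↑(σ v) : HS k) := rfl
      _ = HS.D ↑(σ v) - γ • (↑(σ v) : HS k) := by rw [hcommD σ hσ v]
      _ = Lop γ ↑(σ v) := (Lop_apply _ _).symm
  have hcommLpow : ∀ (σ : V ≃ₗ[k] V), HS.IsDiffAut V σ → ∀ (γ : k) (n : ℕ) (v : V),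
      ((σ ⟨((Lop γ)^n) ↑v, hLopPowV γ n _ v.2⟩ : V) : HS k) = ((Lop γ)^n) ↑(σ v) := by
    intro σ hσ γ n
    induction n with
    | zero =>
      intro v
      have h1 : (⟨((Lop γ)^0) ↑v, hLopPowV γ 0 _ v.2⟩ : V) = v := Subtype.ext (by simp)
      rw [h1]
      simp
    | succ n ih =>
      intro v
      have h1 : (⟨((Lop γ)^(n+1)) ↑v, hLopPowV γ (n+1) _ v.2⟩ : V)
          = ⟨((Lop γ)^n) ↑(⟨Lop γ ↑v, hLopV γ _ v.2⟩ : V),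
              hLopPowV γ n _ (hLopV γ _ v.2)⟩ := by
        apply Subtype.ext
        show ((Lop γ)^(n+1)) ↑v = ((Lop γ)^n) (Lop γ ↑v)
        rw [pow_succ, Module.End.mul_apply]
      rw [h1, ih ⟨Lop γ ↑v, hLopV γ _ v.2⟩, hcommL σ hσ γ v, pow_succ, Module.End.mul_apply]
  -- diff auts preserve each W t
  have hpres : ∀ (σ : V ≃ₗ[k] V), HS.IsDiffAut V σ → ∀ t (v : V),
      (v : HS k) ∈ W t → ((σ v : V) : HS k) ∈ W t := by
    intro σ hσ t v hv
    apply hker t _ (σ v).2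
    have h0 : ((Lop (α t))^(m t + 1)) ↑v = 0 := hkill t _ hv
    have h1 : (⟨((Lop (α t))^(m t + 1)) ↑v, hLopPowV (α t) (m t + 1) _ v.2⟩ : V) = 0 :=
      Subtype.ext h0
    have h2 := hcommLpow σ hσ (α t) (m t + 1) v
    have hz0 : σ (0 : V) = 0 := map_zero σ.toLinearMap
    rw [h1, hz0] at h2
    simpa using h2.symm
  -- inverses of diff auts are diff auts
  have hsymmAut : ∀ (σ : V ≃ₗ[k] V), HS.IsDiffAut V σ → HS.IsDiffAut V σ.symm := by
    intro σ hσ v w hw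
    have h1 : ((σ ⟨HS.D ↑(σ.symm v), hDVmem _ (σ.symm v).2⟩ : V) : HS k)
        = HS.D ↑(σ (σ.symm v)) := hcommD σ hσ (σ.symm v)
    rw [LinearEquiv.apply_symm_apply] at h1
    have h2 : σ ⟨HS.D ↑(σ.symm v), hDVmem _ (σ.symm v).2⟩ = w :=
      Subtype.ext (by rw [h1, hw])
    rw [← h2, LinearEquiv.symm_apply_apply]
  -- the restriction map E
  refine ⟨fun σ t => ⟨restr V (W t) (hWV t) σ.1
      (fun v hv => hpres σ.1 σ.2 t v hv)
      (fun v hv => hpres σ.1.symm (hsymmAut σ.1 σ.2) t v hv),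
    fun v w hw => σ.2 ⟨↑v, hWV t v.2⟩ ⟨↑w, hWV t w.2⟩ hw⟩,
    fun σ t v => rfl, ⟨?_, ?_⟩, ?_⟩
  · -- injectivity
    intro σ τ h
    apply Subtype.ext
    refine LinearEquiv.ext fun u => ?_
    obtain ⟨c, hc⟩ := hVspan ↑u u.2
    have hu : u = ∑ p, c p • (⟨Zf (α p.1) (p.2 : ℕ), hWV p.1 (hgen p)⟩ : V) := by
      apply Subtype.ext
      rw [hc, hsubsum V]
      exact Finset.sum_congr rfl fun p _ => rfl
    have key : ∀ p : Σ t : Fin r, Fin (m t + 1),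
        σ.1 (⟨Zf (α p.1) (p.2 : ℕ), hWV p.1 (hgen p)⟩ : V)
          = τ.1 (⟨Zf (α p.1) (p.2 : ℕ), hWV p.1 (hgen p)⟩ : V) := by
      intro p
      have h2 := congrArg (fun e : {σ : W p.1 ≃ₗ[k] W p.1 // HS.IsDiffAut (W p.1) σ} =>
        ((e.1 ⟨Zf (α p.1) (p.2 : ℕ), hgen p⟩ : W p.1) : HS k)) (congrFun h p.1)
      exact Subtype.ext h2
    have hmapsum : ∀ (ρ : V ≃ₗ[k] V) (f : (Σ t : Fin r, Fin (m t + 1)) → V),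
        ρ (∑ p, f p) = ∑ p, ρ (f p) := fun ρ f => map_sum ρ.toLinearMap f Finset.univ
    have hmapsmul : ∀ (ρ : V ≃ₗ[k] V) (a : k) (x : V), ρ (a • x) = a • ρ x := fun ρ a x =>
      map_smul ρ.toLinearMap a x
    rw [hu, hmapsum, hmapsum]
    exact Finset.sum_congr rfl fun p _ => by rw [hmapsmul, hmapsmul, key p]
  · -- surjectivity
    intro τ
    have hfinrange : ∀ (t : Fin r) (d : Fin (m t + 1) → k),
        (∑ j, d j • Zf (α t) (j : ℕ))
          = ∑ j ∈ Finset.range (m t + 1),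
              (fun i => if h : i < m t + 1 then d ⟨i, h⟩ else 0) j • Zf (α t) j := by
      intro t d
      rw [← Fin.sum_univ_eq_sum_range
        (fun j => (if h : j < m t + 1 then d ⟨j, h⟩ else 0) • Zf (α t) j) (m t + 1)]
      exact Finset.sum_congr rfl fun j _ => by rw [dif_pos j.isLt]
    have hzzli : LinearIndependent k
        (fun p : (Σ t : Fin r, Fin (m t + 1)) => Zf (α p.1) (p.2 : ℕ)) := by
      rw [Fintype.linearIndependent_iff]
      intro c hc p
      have hgW : ∀ s, (∑ j, c ⟨s, j⟩ • Zf (α s) (j : ℕ)) ∈ W s := by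
        intro s
        rw [hWS]
        exact Submodule.sum_mem _ fun j _ => Submodule.smul_mem _ _
          (Submodule.subset_span ⟨j, rfl⟩)
      have hg0 : ∑ s, ∑ j, c ⟨s, j⟩ • Zf (α s) (j : ℕ) = 0 :=
        ((hsig fun p => c p • Zf (α p.1) (p.2 : ℕ)).symm).trans hc
      have hall := hdirect _ hgW hg0 p.1
      rw [hfinrange] at hall
      have h0 := Zf_indep (α p.1) (m p.1) _ hall (p.2 : ℕ) (Nat.lt_succ_iff.mp p.2.isLt)
      rw [dif_pos p.2.isLt] at h0
      exact h0
    have hbbli : LinearIndependent k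
        (fun p : (Σ t : Fin r, Fin (m t + 1)) =>
          (⟨Zf (α p.1) (p.2 : ℕ), hWV p.1 (hgen p)⟩ : V)) :=
      LinearIndependent.of_comp V.subtype (by exact hzzli)
    have hbbspan : ⊤ ≤ Submodule.span k (Set.range
        (fun p : (Σ t : Fin r, Fin (m t + 1)) =>
          (⟨Zf (α p.1) (p.2 : ℕ), hWV p.1 (hgen p)⟩ : V))) := by
      intro u _
      obtain ⟨c, hc⟩ := hVspan ↑u u.2
      have hu : u = ∑ p, c p • (⟨Zf (α p.1) (p.2 : ℕ), hWV p.1 (hgen p)⟩ : V) := by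
        apply Subtype.ext
        rw [hc, hsubsum V]
        exact Finset.sum_congr rfl fun p _ => rfl
      rw [hu]
      exact Submodule.sum_mem _ fun p _ => Submodule.smul_mem _ _
        (Submodule.subset_span ⟨p, rfl⟩)
    let B : Module.Basis (Σ t : Fin r, Fin (m t + 1)) k V := Module.Basis.mk hbbli hbbspan
    let F : V →ₗ[k] V := B.constr k (fun p =>
      (⟨((τ p.1).1 ⟨Zf (α p.1) (p.2 : ℕ), hgen p⟩ : HS k),
        hWV p.1 ((τ p.1).1 ⟨Zf (α p.1) (p.2 : ℕ), hgen p⟩).2⟩ : V))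
    let G : V →ₗ[k] V := B.constr k (fun p =>
      (⟨((τ p.1).1.symm ⟨Zf (α p.1) (p.2 : ℕ), hgen p⟩ : HS k),
        hWV p.1 ((τ p.1).1.symm ⟨Zf (α p.1) (p.2 : ℕ), hgen p⟩).2⟩ : V))
    have hBp : ∀ p : Σ t : Fin r, Fin (m t + 1),
        B p = (⟨Zf (α p.1) (p.2 : ℕ), hWV p.1 (hgen p)⟩ : V) := fun p =>
      Module.Basis.mk_apply hbbli hbbspan p
    have hFbb : ∀ p : Σ t : Fin r, Fin (m t + 1),
        F (⟨Zf (α p.1) (p.2 : ℕ), hWV p.1 (hgen p)⟩ : V)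
          = (⟨((τ p.1).1 ⟨Zf (α p.1) (p.2 : ℕ), hgen p⟩ : HS k),
              hWV p.1 ((τ p.1).1 ⟨Zf (α p.1) (p.2 : ℕ), hgen p⟩).2⟩ : V) := fun p => by
      rw [← hBp p]
      exact B.constr_basis k _ p
    have hGbb : ∀ p : Σ t : Fin r, Fin (m t + 1),
        G (⟨Zf (α p.1) (p.2 : ℕ), hWV p.1 (hgen p)⟩ : V)
          = (⟨((τ p.1).1.symm ⟨Zf (α p.1) (p.2 : ℕ), hgen p⟩ : HS k),
              hWV p.1 ((τ p.1).1.symm ⟨Zf (α p.1) (p.2 : ℕ), hgen p⟩).2⟩ : V) := fun p => by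
      rw [← hBp p]
      exact B.constr_basis k _ p
    have hres : ∀ (H : V →ₗ[k] V) (e : ∀ t, W t →ₗ[k] W t),
        (∀ p : Σ t : Fin r, Fin (m t + 1),
          H (⟨Zf (α p.1) (p.2 : ℕ), hWV p.1 (hgen p)⟩ : V)
            = ⟨↑(e p.1 ⟨Zf (α p.1) (p.2 : ℕ), hgen p⟩),
                hWV p.1 (e p.1 ⟨Zf (α p.1) (p.2 : ℕ), hgen p⟩).2⟩) →
        ∀ t (v : HS k) (hv : v ∈ W t),
          (↑(H ⟨v, hWV t hv⟩) : HS k) = ↑(e t ⟨v, hv⟩) := by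
      intro H e hHbb t v hv
      obtain ⟨c, hc⟩ := hcoeW t v hv
      have h1 : (⟨v, hWV t hv⟩ : V)
          = ∑ j, c j • (⟨Zf (α t) (j : ℕ), hWV t (hgen ⟨t, j⟩)⟩ : V) := by
        apply Subtype.ext
        show v = _
        rw [hsubsum V, hc]
        exact Finset.sum_congr rfl fun j _ => rfl
      have h2 : (⟨v, hv⟩ : W t)
          = ∑ j, c j • (⟨Zf (α t) (j : ℕ), hgen ⟨t, j⟩⟩ : W t) := by
        apply Subtype.ext
        show v = _
        rw [hsubsum (W t), hc]
        exact Finset.sum_congr rfl fun j _ => rfl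
      rw [h1, h2, map_sum, map_sum, hsubsum V, hsubsum (W t)]
      refine Finset.sum_congr rfl fun j _ => ?_
      rw [map_smul, map_smul]
      exact congrArg (fun x : V => ((c j • x : V) : HS k)) (hHbb ⟨t, j⟩)
    have hFres := hres F (fun t => ((τ t).1 : W t →ₗ[k] W t)) hFbb
    have hGres := hres G (fun t => ((τ t).1.symm : W t →ₗ[k] W t)) hGbb
    have hGF : G.comp F = LinearMap.id := by
      refine Module.Basis.ext B fun p => ?_
      rw [hBp p]
      show G (F ⟨Zf (α p.1) (p.2 : ℕ), hWV p.1 (hgen p)⟩)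
        = (⟨Zf (α p.1) (p.2 : ℕ), hWV p.1 (hgen p)⟩ : V)
      rw [hFbb p]
      apply Subtype.ext
      have h3 := hGres p.1 ↑((τ p.1).1 ⟨Zf (α p.1) (p.2 : ℕ), hgen p⟩)
        ((τ p.1).1 ⟨Zf (α p.1) (p.2 : ℕ), hgen p⟩).2
      have h4 : (((τ p.1).1.symm ⟨↑((τ p.1).1 ⟨Zf (α p.1) (p.2 : ℕ), hgen p⟩),
          ((τ p.1).1 ⟨Zf (α p.1) (p.2 : ℕ), hgen p⟩).2⟩ : W p.1) : HS k)
          = Zf (α p.1) (p.2 : ℕ) := by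
        rw [Subtype.coe_eta, LinearEquiv.symm_apply_apply]
      exact h3.trans h4
    have hFG : F.comp G = LinearMap.id := by
      refine Module.Basis.ext B fun p => ?_
      rw [hBp p]
      show F (G ⟨Zf (α p.1) (p.2 : ℕ), hWV p.1 (hgen p)⟩)
        = (⟨Zf (α p.1) (p.2 : ℕ), hWV p.1 (hgen p)⟩ : V)
      rw [hGbb p]
      apply Subtype.ext
      have h3 := hFres p.1 ↑((τ p.1).1.symm ⟨Zf (α p.1) (p.2 : ℕ), hgen p⟩)
        ((τ p.1).1.symm ⟨Zf (α p.1) (p.2 : ℕ), hgen p⟩).2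
      have h4 : (((τ p.1).1 ⟨↑((τ p.1).1.symm ⟨Zf (α p.1) (p.2 : ℕ), hgen p⟩),
          ((τ p.1).1.symm ⟨Zf (α p.1) (p.2 : ℕ), hgen p⟩).2⟩ : W p.1) : HS k)
          = Zf (α p.1) (p.2 : ℕ) := by
        rw [Subtype.coe_eta, LinearEquiv.apply_symm_apply]
      exact h3.trans h4
    have hDVmem' : ∀ x ∈ V, Dlin k x ∈ V := hDVmem
    let DV : V →ₗ[k] V := (Dlin k).restrict hDVmem'
    have hcomm : F.comp DV = DV.comp F := by
      refine Module.Basis.ext B fun p => ?_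
      rw [hBp p]
      show F (DV ⟨Zf (α p.1) (p.2 : ℕ), hWV p.1 (hgen p)⟩)
        = DV (F ⟨Zf (α p.1) (p.2 : ℕ), hWV p.1 (hgen p)⟩)
      have hD1 : DV (⟨Zf (α p.1) (p.2 : ℕ), hWV p.1 (hgen p)⟩ : V)
          = ⟨HS.D (Zf (α p.1) (p.2 : ℕ)), hWV p.1 (hDWmem p.1 _ (hgen p))⟩ :=
        Subtype.ext rfl
      rw [hD1, hFbb p]
      apply Subtype.ext
      have h5 := hFres p.1 (HS.D (Zf (α p.1) (p.2 : ℕ))) (hDWmem p.1 _ (hgen p))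
      have h6 : (↑(DV (⟨↑((τ p.1).1 ⟨Zf (α p.1) (p.2 : ℕ), hgen p⟩),
          hWV p.1 ((τ p.1).1 ⟨Zf (α p.1) (p.2 : ℕ), hgen p⟩).2⟩ : V)) : HS k)
          = HS.D ↑((τ p.1).1 ⟨Zf (α p.1) (p.2 : ℕ), hgen p⟩) := rfl
      rw [h5, h6]
      exact (τ p.1).2 ⟨Zf (α p.1) (p.2 : ℕ), hgen p⟩
        ⟨HS.D (Zf (α p.1) (p.2 : ℕ)), hDWmem p.1 _ (hgen p)⟩ rfl
    let σ0 : V ≃ₗ[k] V := LinearEquiv.ofLinear F G hFG hGF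
    have hσ0 : HS.IsDiffAut V σ0 := by
      intro v w hw
      have hwv : w = DV v := Subtype.ext hw
      have h7 : ∀ u : V, σ0 u = F u := fun u => rfl
      rw [hwv, h7 (DV v), h7 v]
      have h9 : F (DV v) = DV (F v) := LinearMap.congr_fun hcomm v
      rw [h9]
      rfl
    refine ⟨⟨σ0, hσ0⟩, ?_⟩
    funext t
    apply Subtype.ext
    refine LinearEquiv.ext fun v => ?_
    apply Subtype.ext
    exact hFres t ↑v v.2
  · -- functoriality
    intro σ τ' ρ hρ t v
    have key : ρ.1 ⟨↑v, hWV t v.2⟩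
        = σ.1 ⟨↑(τ'.1 ⟨↑v, hWV t v.2⟩), hWV t (hpres τ'.1 τ'.2 t ⟨↑v, hWV t v.2⟩ v.2)⟩ := by
      rw [hρ ⟨↑v, hWV t v.2⟩]
    exact Subtype.ext (congrArg (fun x : V => (x : HS k)) key)
end

section
/- Let k be a field with algebraic closure k̄, and regard Hk as a subring of Hk̄ via the entrywise inclusion k ⊆ k̄. Let n ≥ 1, a_0, …, a_{n−1} ∈ k, and L(y) = ∂ⁿ(y) + Σ_{i=0}^{n−1} a_i·∂ⁱ(y). If y_1, …, y_n ∈ Hk are k-linearly independent solutions of L(y) = 0, then y_1, …, y_n are linearly independent over k̄ as elements of Hk̄. -/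
open scoped BigOperators

set_option linter.unusedSectionVars false

section Aux

variable {R : Type*} [CommRing R]

theorem HS.D_iterate_apply (p : ℕ) (z : HS R) (m : ℕ) :
    HS.D^[p] z m = z (m + p) := by
  induction p generalizing z m with
  | zero => rfl
  | succ p ih =>
    rw [Function.iterate_succ_apply, ih, HS.D_apply]
    ring_nf

theorem HS.const_mul_apply (r : R) (w : HS R) (m : ℕ) :
    (HS.const r * w) m = r * w m := by
  rw [HS.mul_apply, Finset.sum_eq_single 0]
  · simp [HS.const]
  · intro j hj hj0
    simp [HS.const, hj0]
  · intro h
    exact absurd (Finset.mem_range.mpr (Nat.succ_pos m)) h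

end Aux

/-- `k`-linearly independent solutions `y₁, …, y_n ∈ Hk` of
`∂ⁿ y + ∑ aᵢ ∂ⁱ y = 0` remain linearly independent over the algebraic closure `k̄`
as elements of `Hk̄`. -/
theorem stmt_12 {k : Type*} [Field k] (n : ℕ) (hn : 1 ≤ n) (a : Fin n → k)
    (y : Fin n → HS k)
    (hsol : ∀ j, HS.D^[n] (y j) + ∑ i : Fin n, HS.const (a i) * HS.D^[(i : ℕ)] (y j) = 0)
    (hind : LinearIndependent k y) :
    LinearIndependent (AlgebraicClosure k)
      (fun j : Fin n => HS.map (algebraMap k (AlgebraicClosure k)) (y j)) := by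
  
  classical
  set K := AlgebraicClosure k
  set f := algebraMap k K
  -- recurrence for each y j
  have hrec : ∀ j m, y j (m + n) = -∑ i : Fin n, a i * y j (m + i) := by
    intro j m
    have := congrFun (hsol j) m
    simp only [HS.add_apply, HS.zero_apply] at this
    have hsum : (∑ i : Fin n, HS.const (a i) * HS.D^[(i : ℕ)] (y j)) m
        = ∑ i : Fin n, a i * y j (m + i) := by
      have : ∀ i : Fin n, (HS.const (a i) * HS.D^[(i : ℕ)] (y j)) m
          = a i * y j (m + i) := by
        intro i
        rw [HS.const_mul_apply, HS.D_iterate_apply]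
      calc (∑ i : Fin n, HS.const (a i) * HS.D^[(i : ℕ)] (y j)) m
          = ∑ i : Fin n, (HS.const (a i) * HS.D^[(i : ℕ)] (y j)) m := by
            exact Finset.sum_apply m Finset.univ _
        _ = ∑ i : Fin n, a i * y j (m + i) := Finset.sum_congr rfl fun i _ => this i
    rw [HS.D_iterate_apply, hsum] at this
    linear_combination this
  -- initial value matrix
  set M : Matrix (Fin n) (Fin n) k := Matrix.of fun j m => y j ((m : ℕ)) with hM
  -- rows of M are linearly independent over k
  have hMrows : LinearIndependent k (fun j => M j) := by
    rw [Fintype.linearIndependent_iff]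
    intro b hb j
    -- z = ∑ b j • y j vanishes on first n entries, hence everywhere
    set z : ℕ → k := fun m => ∑ j : Fin n, b j * y j m with hz
    have hz0 : ∀ m : ℕ, m < n → z m = 0 := by
      intro m hm
      have := congrFun hb ⟨m, hm⟩
      simpa [hz, M, Finset.sum_apply] using this
    have hzall : ∀ m, z m = 0 := by
      intro m
      induction m using Nat.strong_induction_on with
      | _ m ih =>
        by_cases hm : m < n
        · exact hz0 m hm
        · push_neg at hm
          have hmn : m = (m - n) + n := by omega
          have : z ((m - n) + n) = -∑ i : Fin n, a i * z ((m - n) + i) := by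
            simp only [hz, Finset.mul_sum]
            rw [Finset.sum_comm]
            rw [← Finset.sum_neg_distrib]
            refine Finset.sum_congr rfl fun j _ => ?_
            rw [hrec j (m - n), mul_neg, Finset.mul_sum]
            exact neg_inj.mpr (Finset.sum_congr rfl fun i _ => by ring)
          rw [← hmn] at this
          rw [this]
          have : ∀ i : Fin n, a i * z ((m - n) + i) = 0 := by
            intro i
            rw [ih ((m - n) + i) (by omega)]
            ring
          simp [this]
    have hy0 : ∑ j : Fin n, b j • y j = 0 := by
      funext m
      have h1 : (∑ j : Fin n, b j • y j) m = ∑ j : Fin n, (b j • y j) m :=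
        Finset.sum_apply m Finset.univ _
      rw [h1]
      have h2 : ∑ j : Fin n, (b j • y j) m = z m := by
        simp [hz, smul_eq_mul]
      rw [h2, hzall]
      rfl
    exact Fintype.linearIndependent_iff.mp hind b hy0 j
  have hMunit : IsUnit M := Matrix.linearIndependent_rows_iff_isUnit.mp hMrows
  have hMdet : M.det ≠ 0 := by
    intro h
    rw [Matrix.isUnit_iff_isUnit_det, h] at hMunit
    exact hMunit.ne_zero rfl
  -- the mapped transpose matrix
  set A : Matrix (Fin n) (Fin n) K := Matrix.transpose (M.map (f : k → K)) with hA
  have hAdet : A.det ≠ 0 := by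
    rw [hA, Matrix.det_transpose]
    have hd : (M.map (f : k → K)).det = f M.det := (RingHom.map_det f M).symm
    rw [hd]
    intro h
    exact hMdet ((algebraMap k K).injective (by simpa using h))
  rw [Fintype.linearIndependent_iff]
  intro c hc j
  have hmv : A.mulVec c = 0 := by
    funext m
    have h0 := congrFun hc (m : ℕ)
    have h1 : (∑ i : Fin n, c i • HS.map (f : k → K) (y i)) (m : ℕ)
        = ∑ i : Fin n, c i * f (y i (m : ℕ)) := by
      refine (Finset.sum_apply (m : ℕ) Finset.univ _).trans ?_
      exact Finset.sum_congr rfl fun i _ => rfl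
    rw [h1] at h0
    show ∑ i : Fin n, A m i * c i = (0 : Fin n → K) m
    calc ∑ i : Fin n, A m i * c i
        = ∑ i : Fin n, c i * f (y i (m : ℕ)) := by
          refine Finset.sum_congr rfl fun i _ => ?_
          simp only [hA, Matrix.transpose_apply, Matrix.map_apply, hM, Matrix.of_apply]
          ring
      _ = 0 := h0
  have := Matrix.eq_zero_of_mulVec_eq_zero hAdet hmv
  exact congrFun this j
end

section
/- Let k be a field, let y_1, y_2 ∈ Hk be the Fibonacci-type sequences determined by π_0(y_1)=1, π_1(y_1)=0, π_0(y_2)=0, π_1(y_2)=1, and π_{n+2}(y_i) = π_{n+1}(y_i) + π_n(y_i) for all n ∈ ℕ and i = 1,2, and let V = Span_k{y_1, y_2}, the full set of solutions of ∂²(y) − ∂(y) − y = 0 in Hk. Then the map sending σ ∈ G(V|k) to its matrix C_σ in the ordered basis (y_1, y_2) (i.e., σ(y_j) = Σ_i (C_σ)_{ij}·y_i) is a group isomorphism from G(V|k) onto {[[α, β],[β, α+β]] ∈ GL(2,k) : α, β ∈ k}, which equals Span_k{I, B} ∩ GL(2,k) for B = [[0,1],[1,1]]. -/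
open scoped BigOperators

set_option linter.unusedSectionVars false

namespace HSFib
open HS

variable {k : Type*} [Field k]

theorem sub_apply' (a b : HS k) (n : ℕ) : (a - b) n = a n - b n := rfl

theorem rec_ext (y z : HS k)
    (hy : ∀ n, y (n+2) = y (n+1) + y n) (hz : ∀ n, z (n+2) = z (n+1) + z n)
    (h0 : y 0 = z 0) (h1 : y 1 = z 1) : y = z := by
  funext n
  induction n using Nat.twoStepInduction with
  | zero => exact h0
  | one => exact h1
  | more n ih1 ih2 => rw [hy, hz, ih1, ih2]

variable (y₁ y₂ : HS k)
    (h10 : y₁ 0 = 1) (h11 : y₁ 1 = 0) (h20 : y₂ 0 = 0) (h21 : y₂ 1 = 1)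
    (hrec1 : ∀ n : ℕ, y₁ (n + 2) = y₁ (n + 1) + y₁ n)
    (hrec2 : ∀ n : ℕ, y₂ (n + 2) = y₂ (n + 1) + y₂ n)

include h10 h11 h20 h21 hrec1 hrec2

theorem comb_rec (a b : k) (n : ℕ) :
    (a • y₁ + b • y₂) (n+2) = (a • y₁ + b • y₂) (n+1) + (a • y₁ + b • y₂) n := by
  simp only [HS.add_apply, HS.smul_apply, smul_eq_mul, hrec1, hrec2]; ring

theorem comb0 (a b : k) : (a • y₁ + b • y₂) 0 = a := by
  simp [h10, h20]
theorem comb1 (a b : k) : (a • y₁ + b • y₂) 1 = b := by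
  simp [h11, h21]

theorem span_rec (v : HS k) (hv : v ∈ Submodule.span k {y₁, y₂}) (n : ℕ) :
    v (n+2) = v (n+1) + v n := by
  induction hv using Submodule.span_induction with
  | mem x hx =>
    rcases hx with h | h
    · subst h; exact hrec1 n
    · simp only [Set.mem_singleton_iff] at h; subst h; exact hrec2 n
  | zero => simp
  | add x y _ _ hx hy => simp [hx, hy]; ring
  | smul a x _ hx => simp [hx]; ring

theorem rec_repr (y : HS k) (hy : ∀ n, y (n+2) = y (n+1) + y n) :
    y = y 0 • y₁ + y 1 • y₂ :=
  rec_ext y _ hy (comb_rec y₁ y₂ h10 h11 h20 h21 hrec1 hrec2 _ _)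
    (comb0 y₁ y₂ h10 h11 h20 h21 hrec1 hrec2 _ _).symm
    (comb1 y₁ y₂ h10 h11 h20 h21 hrec1 hrec2 _ _).symm

theorem D_y₁ : D y₁ = y₂ := by
  refine rec_ext _ _ (fun n => hrec1 (n+1)) hrec2 ?_ ?_
  · show y₁ 1 = y₂ 0; rw [h11, h20]
  · show y₁ 2 = y₂ 1; rw [hrec1 0, h10, h11, h21]; ring

theorem D_y₂ : D y₂ = y₁ + y₂ := by
  refine rec_ext _ _ (fun n => hrec2 (n+1)) (fun n => ?_) ?_ ?_
  · simp only [HS.add_apply, hrec1, hrec2]; ring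
  · simp [h21, h10, h20]
  · simp only [D_apply, HS.add_apply]; rw [hrec2 0, h20, h21, h11]; ring

theorem D_add (a b : HS k) : D (a + b) = D a + D b := rfl
theorem D_smul (c : k) (a : HS k) : D (c • a) = c • D a := rfl

end HSFib

set_option maxHeartbeats 2000000 in
/-- Example 2: for the Fibonacci-type solutions `y₁, y₂` of `∂²y - ∂y - y = 0`,
the matrix representation in the basis `(y₁, y₂)` is a group isomorphism from `G(V|k)` onto
`{[[α, β], [β, α+β]]} ∩ GL(2,k) = Span_k{I, B} ∩ GL(2,k)` with `B = [[0,1],[1,1]]`. -/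
theorem stmt_19 {k : Type*} [Field k] (y₁ y₂ : HS k)
    (h10 : y₁ 0 = 1) (h11 : y₁ 1 = 0) (h20 : y₂ 0 = 0) (h21 : y₂ 1 = 1)
    (hrec1 : ∀ n : ℕ, y₁ (n + 2) = y₁ (n + 1) + y₁ n)
    (hrec2 : ∀ n : ℕ, y₂ (n + 2) = y₂ (n + 1) + y₂ n)
    (V : Submodule k (HS k)) (hV : V = Submodule.span k {y₁, y₂})
    (hm1 : y₁ ∈ V) (hm2 : y₂ ∈ V) :
    (V : Set (HS k)) = {y : HS k | HS.D (HS.D y) - HS.D y - y = 0} ∧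
    ∃ C : {σ : V ≃ₗ[k] V // HS.IsDiffAut V σ} → Matrix (Fin 2) (Fin 2) k,
      (∀ σ, ((σ.1 ⟨y₁, hm1⟩ : V) : HS k) = C σ 0 0 • y₁ + C σ 1 0 • y₂) ∧
      (∀ σ, ((σ.1 ⟨y₂, hm2⟩ : V) : HS k) = C σ 0 1 • y₁ + C σ 1 1 • y₂) ∧
      Function.Injective C ∧
      (∀ σ τ ρ, (∀ v : V, ρ.1 v = σ.1 (τ.1 v)) → C ρ = C σ * C τ) ∧
      Set.range C = {U : Matrix (Fin 2) (Fin 2) k | IsUnit U ∧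
        ∃ x w : k, U = Matrix.of ![![x, w], ![w, x + w]]} ∧
      {U : Matrix (Fin 2) (Fin 2) k | IsUnit U ∧
          ∃ x w : k, U = Matrix.of ![![x, w], ![w, x + w]]} =
        {U : Matrix (Fin 2) (Fin 2) k | IsUnit U ∧
          U ∈ Submodule.span k {(1 : Matrix (Fin 2) (Fin 2) k),
            Matrix.of ![![0, 1], ![1, 1]]}} := by
  classical
  -- coordinate lemmas
  have c0 : ∀ a b : k, (a • y₁ + b • y₂) 0 = a := fun a b => by
    simp [h10, h20]
  have c1 : ∀ a b : k, (a • y₁ + b • y₂) 1 = b := fun a b => by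
    simp [h11, h21]
  have vrec : ∀ v : V, ∀ n : ℕ, (v : HS k) (n+2) = (v : HS k) (n+1) + (v : HS k) n :=
    fun v n => HSFib.span_rec y₁ y₂ h10 h11 h20 h21 hrec1 hrec2 (v : HS k) (hV ▸ v.2) n
  have hcomb : ∀ a b : k, a • y₁ + b • y₂ ∈ V := by
    intro a b
    rw [hV]
    exact add_mem (Submodule.smul_mem _ _ (Submodule.subset_span (by simp)))
      (Submodule.smul_mem _ _ (Submodule.subset_span (by simp)))
  have Hrepr : ∀ v : V, (v : HS k) = (v : HS k) 0 • y₁ + (v : HS k) 1 • y₂ :=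
    fun v => HSFib.rec_repr y₁ y₂ h10 h11 h20 h21 hrec1 hrec2 _ (vrec v)
  have Hext : ∀ v w : V, (v : HS k) 0 = (w : HS k) 0 → (v : HS k) 1 = (w : HS k) 1 → v = w :=
    fun v w e0 e1 => Subtype.ext (HSFib.rec_ext _ _ (vrec v) (vrec w) e0 e1)
  have hDmem : ∀ v : V, HS.D (v : HS k) ∈ V := by
    intro v
    have hr : ∀ n : ℕ, HS.D (v : HS k) (n+2) = HS.D (v : HS k) (n+1) + HS.D (v : HS k) n :=
      fun n => vrec v (n+1)
    rw [HSFib.rec_repr y₁ y₂ h10 h11 h20 h21 hrec1 hrec2 _ hr]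
    exact hcomb _ _
  set e₁ : V := ⟨y₁, hm1⟩ with he₁
  set e₂ : V := ⟨y₂, hm2⟩ with he₂
  have hy2Dy1 : (e₂ : HS k) = HS.D (e₁ : HS k) :=
    (HSFib.D_y₁ y₁ y₂ h10 h11 h20 h21 hrec1 hrec2).symm
  refine ⟨?_, ?_⟩
  · -- V is the full solution set
    ext y
    simp only [Set.mem_setOf_eq, SetLike.mem_coe]
    constructor
    · intro hy
      funext n
      have h2 : y (n+2) = y (n+1) + y n := vrec ⟨y, hy⟩ n
      show y (n+2) - y (n+1) - y n = 0
      rw [h2]; ring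
    · intro hy
      have hr : ∀ n : ℕ, y (n+2) = y (n+1) + y n := by
        intro n
        have h2 : y (n+2) - y (n+1) - y n = 0 := congrFun hy n
        linear_combination h2
      rw [HSFib.rec_repr y₁ y₂ h10 h11 h20 h21 hrec1 hrec2 _ hr]
      exact hcomb _ _
  -- the matrix map
  set Cf : {σ : V ≃ₗ[k] V // HS.IsDiffAut V σ} → Matrix (Fin 2) (Fin 2) k :=
    fun σ => Matrix.of ![![((σ.1 e₁ : V) : HS k) 0, ((σ.1 e₂ : V) : HS k) 0],
                         ![((σ.1 e₁ : V) : HS k) 1, ((σ.1 e₂ : V) : HS k) 1]] with hCf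
  have hC00 : ∀ σ, Cf σ 0 0 = ((σ.1 e₁ : V) : HS k) 0 := fun σ => rfl
  have hC01 : ∀ σ, Cf σ 0 1 = ((σ.1 e₂ : V) : HS k) 0 := fun σ => rfl
  have hC10 : ∀ σ, Cf σ 1 0 = ((σ.1 e₁ : V) : HS k) 1 := fun σ => rfl
  have hC11 : ∀ σ, Cf σ 1 1 = ((σ.1 e₂ : V) : HS k) 1 := fun σ => rfl
  -- decomposition of vectors of V
  have hdecomp : ∀ v : V, v = (v : HS k) 0 • e₁ + (v : HS k) 1 • e₂ := by
    intro v
    apply Subtype.ext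
    push_cast [Submodule.coe_add, Submodule.coe_smul]
    exact Hrepr v
  have Happ : ∀ (σ : {σ : V ≃ₗ[k] V // HS.IsDiffAut V σ}) (v : V) (n : ℕ),
      ((σ.1 v : V) : HS k) n
        = (v : HS k) 0 * ((σ.1 e₁ : V) : HS k) n + (v : HS k) 1 * ((σ.1 e₂ : V) : HS k) n := by
    intro σ v n
    conv_lhs => rw [hdecomp v]
    rw [map_add, map_smul, map_smul]
    simp
  have hb1 : ∀ σ, ((σ.1 ⟨y₁, hm1⟩ : V) : HS k) = Cf σ 0 0 • y₁ + Cf σ 1 0 • y₂ := by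
    intro σ
    rw [hC00, hC10]
    exact Hrepr _
  have hb2 : ∀ σ, ((σ.1 ⟨y₂, hm2⟩ : V) : HS k) = Cf σ 0 1 • y₁ + Cf σ 1 1 • y₂ := by
    intro σ
    rw [hC01, hC11]
    exact Hrepr _
  have hinj : Function.Injective Cf := by
    intro σ τ h
    have hE := fun i j => Matrix.ext_iff.2 h i j
    have hσ1 : σ.1 e₁ = τ.1 e₁ := Hext _ _ (by rw [← hC00, ← hC00, h]) (by rw [← hC10, ← hC10, h])
    have hσ2 : σ.1 e₂ = τ.1 e₂ := Hext _ _ (by rw [← hC01, ← hC01, h]) (by rw [← hC11, ← hC11, h])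
    apply Subtype.ext
    apply LinearEquiv.toLinearMap_injective
    apply LinearMap.ext
    intro v
    show σ.1 v = τ.1 v
    rw [hdecomp v, map_add, map_smul, map_smul, map_add, map_smul, map_smul, hσ1, hσ2]
  have hmul : ∀ σ τ ρ, (∀ v : V, ρ.1 v = σ.1 (τ.1 v)) → Cf ρ = Cf σ * Cf τ := by
    intro σ τ ρ hcomp
    have k1 : ∀ n : ℕ, ((ρ.1 e₁ : V) : HS k) n
        = ((τ.1 e₁ : V) : HS k) 0 * ((σ.1 e₁ : V) : HS k) n
          + ((τ.1 e₁ : V) : HS k) 1 * ((σ.1 e₂ : V) : HS k) n := by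
      intro n; rw [hcomp e₁]; exact Happ σ (τ.1 e₁) n
    have k2 : ∀ n : ℕ, ((ρ.1 e₂ : V) : HS k) n
        = ((τ.1 e₂ : V) : HS k) 0 * ((σ.1 e₁ : V) : HS k) n
          + ((τ.1 e₂ : V) : HS k) 1 * ((σ.1 e₂ : V) : HS k) n := by
      intro n; rw [hcomp e₂]; exact Happ σ (τ.1 e₂) n
    ext i j
    fin_cases i <;> fin_cases j <;>
      simp only [Fin.mk_zero, Fin.mk_one, Fin.isValue, Matrix.mul_apply, Fin.sum_univ_two,
        hC00, hC01, hC10, hC11, k1, k2] <;>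
      ring
  -- symm of a diff aut is a diff aut
  have symm_da : ∀ σ : {σ : V ≃ₗ[k] V // HS.IsDiffAut V σ}, HS.IsDiffAut V σ.1.symm := by
    intro σ v w hw
    set v' : V := σ.1.symm v with hv'
    have h1 : (σ.1 ⟨HS.D (v' : HS k), hDmem v'⟩ : HS k) = HS.D ((σ.1 v' : V) : HS k) :=
      σ.2 v' _ rfl
    have h2 : (σ.1 v' : V) = v := σ.1.apply_symm_apply v
    have h3 : σ.1 ⟨HS.D (v' : HS k), hDmem v'⟩ = w := by
      apply Subtype.ext
      rw [h1, h2, ← hw]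
    have h4 : σ.1.symm w = ⟨HS.D (v' : HS k), hDmem v'⟩ := by
      rw [← h3, σ.1.symm_apply_apply]
    rw [h4]
  have idda : HS.IsDiffAut V (LinearEquiv.refl k V) := fun v w h => h
  have hCid : Cf ⟨LinearEquiv.refl k V, idda⟩ = 1 := by
    ext i j
    fin_cases i <;> fin_cases j <;>
      simp only [Fin.mk_zero, Fin.mk_one, Fin.isValue, hC00, hC01, hC10, hC11, LinearEquiv.refl_apply, Matrix.one_apply] <;>
      simp [he₁, he₂, h10, h11, h20, h21]
  have hunit : ∀ σ, IsUnit (Cf σ) := by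
    intro σ
    have hA : Cf ⟨LinearEquiv.refl k V, idda⟩ = Cf σ * Cf ⟨σ.1.symm, symm_da σ⟩ :=
      hmul _ _ _ (fun v => (σ.1.apply_symm_apply v).symm)
    have hB : Cf ⟨LinearEquiv.refl k V, idda⟩ = Cf ⟨σ.1.symm, symm_da σ⟩ * Cf σ :=
      hmul _ _ _ (fun v => (σ.1.symm_apply_apply v).symm)
    rw [hCid] at hA hB
    exact ⟨⟨Cf σ, Cf ⟨σ.1.symm, symm_da σ⟩, hA.symm, hB.symm⟩, rfl⟩
  have hrange : Set.range Cf = {U : Matrix (Fin 2) (Fin 2) k | IsUnit U ∧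
      ∃ x w : k, U = Matrix.of ![![x, w], ![w, x + w]]} := by
    apply Set.eq_of_subset_of_subset
    · rintro U ⟨σ, rfl⟩
      refine ⟨hunit σ, ((σ.1 e₁ : V) : HS k) 0, ((σ.1 e₁ : V) : HS k) 1, ?_⟩
      have hd : ((σ.1 e₂ : V) : HS k) = HS.D ((σ.1 e₁ : V) : HS k) := σ.2 e₁ e₂ hy2Dy1
      ext i j
      fin_cases i <;> fin_cases j
      · rfl
      · show Cf σ 0 1 = _
        rw [hC01, hd]
        rfl
      · rfl
      · show Cf σ 1 1 = _
        rw [hC11, hd]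
        show ((σ.1 e₁ : V) : HS k) 2 = _
        rw [vrec (σ.1 e₁) 0]
        exact add_comm _ _
    · rintro U ⟨hU, x, w, rfl⟩
      set d : k := x * (x + w) - w * w with hd
      have hdet : d ≠ 0 := by
        have h1 := (Matrix.isUnit_iff_isUnit_det _).1 hU
        rw [Matrix.det_fin_two] at h1
        have h2 : (Matrix.of ![![x, w], ![w, x + w]] : Matrix (Fin 2) (Fin 2) k) 0 0 *
            (Matrix.of ![![x, w], ![w, x + w]] : Matrix (Fin 2) (Fin 2) k) 1 1 -
            (Matrix.of ![![x, w], ![w, x + w]] : Matrix (Fin 2) (Fin 2) k) 0 1 *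
            (Matrix.of ![![x, w], ![w, x + w]] : Matrix (Fin 2) (Fin 2) k) 1 0
            = x * (x + w) - w * w := by
          simp
        rw [h2] at h1
        rw [hd]
        exact isUnit_iff_ne_zero.1 h1
      have hneg : ∀ (a : HS k) (n : ℕ), (-a) n = -(a n) := fun _ _ => rfl
      set Z₁ : HS k := x • y₁ + w • y₂ with hZ1
      set Z₂ : HS k := w • y₁ + (x + w) • y₂ with hZ2
      set W₁ : HS k := (d⁻¹ * (x + w)) • y₁ + (d⁻¹ * (-w)) • y₂ with hW1
      set W₂ : HS k := (d⁻¹ * (-w)) • y₁ + (d⁻¹ * x) • y₂ with hW2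
      let F : V →ₗ[k] V :=
        { toFun := fun v => ⟨(v : HS k) 0 • Z₁ + (v : HS k) 1 • Z₂,
            add_mem (Submodule.smul_mem _ _ (hcomb _ _)) (Submodule.smul_mem _ _ (hcomb _ _))⟩
          map_add' := fun a b => Subtype.ext (by
            show ((a + b : V) : HS k) 0 • Z₁ + ((a + b : V) : HS k) 1 • Z₂
              = ((a : HS k) 0 • Z₁ + (a : HS k) 1 • Z₂) + ((b : HS k) 0 • Z₁ + (b : HS k) 1 • Z₂)
            rw [Submodule.coe_add, HS.add_apply, HS.add_apply, add_smul, add_smul]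
            abel)
          map_smul' := fun c a => Subtype.ext (by
            show ((c • a : V) : HS k) 0 • Z₁ + ((c • a : V) : HS k) 1 • Z₂
              = c • ((a : HS k) 0 • Z₁ + (a : HS k) 1 • Z₂)
            rw [Submodule.coe_smul, HS.smul_apply, HS.smul_apply]
            simp [smul_eq_mul, mul_smul, smul_add]) }
      let G : V →ₗ[k] V :=
        { toFun := fun v => ⟨(v : HS k) 0 • W₁ + (v : HS k) 1 • W₂,
            add_mem (Submodule.smul_mem _ _ (hcomb _ _)) (Submodule.smul_mem _ _ (hcomb _ _))⟩
          map_add' := fun a b => Subtype.ext (by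
            show ((a + b : V) : HS k) 0 • W₁ + ((a + b : V) : HS k) 1 • W₂
              = ((a : HS k) 0 • W₁ + (a : HS k) 1 • W₂) + ((b : HS k) 0 • W₁ + (b : HS k) 1 • W₂)
            rw [Submodule.coe_add, HS.add_apply, HS.add_apply, add_smul, add_smul]
            abel)
          map_smul' := fun c a => Subtype.ext (by
            show ((c • a : V) : HS k) 0 • W₁ + ((c • a : V) : HS k) 1 • W₂
              = c • ((a : HS k) 0 • W₁ + (a : HS k) 1 • W₂)
            rw [Submodule.coe_smul, HS.smul_apply, HS.smul_apply]
            simp [smul_eq_mul, mul_smul, smul_add]) }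
      have F0 : ∀ v : V, ((F v : V) : HS k) 0 = (v : HS k) 0 * x + (v : HS k) 1 * w := by
        intro v
        show ((v : HS k) 0 • Z₁ + (v : HS k) 1 • Z₂) 0 = _
        simp [hZ1, hZ2, h10, h11, h20, h21]
      have F1 : ∀ v : V, ((F v : V) : HS k) 1 = (v : HS k) 0 * w + (v : HS k) 1 * (x + w) := by
        intro v
        show ((v : HS k) 0 • Z₁ + (v : HS k) 1 • Z₂) 1 = _
        simp [hZ1, hZ2, h10, h11, h20, h21]
      have G0 : ∀ v : V, ((G v : V) : HS k) 0
          = (v : HS k) 0 * (d⁻¹ * (x + w)) + (v : HS k) 1 * (d⁻¹ * (-w)) := by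
        intro v
        show ((v : HS k) 0 • W₁ + (v : HS k) 1 • W₂) 0 = _
        simp [hW1, hW2, h10, h11, h20, h21, hneg]
      have G1 : ∀ v : V, ((G v : V) : HS k) 1
          = (v : HS k) 0 * (d⁻¹ * (-w)) + (v : HS k) 1 * (d⁻¹ * x) := by
        intro v
        show ((v : HS k) 0 • W₁ + (v : HS k) 1 • W₂) 1 = _
        simp [hW1, hW2, h10, h11, h20, h21, hneg]
      have hFG : ∀ v : V, F (G v) = v := by
        intro v
        refine Hext _ _ ?_ ?_
        · rw [F0, G0, G1]; field_simp; ring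
        · rw [F1, G0, G1]; field_simp; ring
      have hGF : ∀ v : V, G (F v) = v := by
        intro v
        refine Hext _ _ ?_ ?_
        · rw [G0, F0, F1]; field_simp; ring
        · rw [G1, F0, F1]; field_simp; ring
      set σe : V ≃ₗ[k] V := LinearEquiv.ofLinear F G
        (LinearMap.ext fun v => hFG v) (LinearMap.ext fun v => hGF v) with hσe
      have hσF : ∀ v : V, σe v = F v := fun v => rfl
      have hda : HS.IsDiffAut V σe := by
        intro v u hu
        have hv2 : (u : HS k) 0 = (v : HS k) 1 := by rw [hu]; rfl
        have hv3 : (u : HS k) 1 = (v : HS k) 1 + (v : HS k) 0 := by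
          rw [hu]; exact vrec v 0
        show ((σe u : V) : HS k) = HS.D ((σe v : V) : HS k)
        refine HSFib.rec_ext _ _ (fun n => vrec (σe u) n) (fun n => vrec (σe v) (n+1)) ?_ ?_
        · show ((σe u : V) : HS k) 0 = ((σe v : V) : HS k) 1
          rw [hσF, hσF, F0, F1, hv2, hv3]; ring
        · show ((σe u : V) : HS k) 1 = ((σe v : V) : HS k) 2
          rw [vrec (σe v) 0, hσF, hσF, F1, F0, F1, hv2, hv3]; ring
      refine ⟨⟨σe, hda⟩, ?_⟩
      ext i j
      fin_cases i <;> fin_cases j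
      · show ((σe e₁ : V) : HS k) 0 = _
        rw [hσF, F0]
        show y₁ 0 * x + y₁ 1 * w = x
        rw [h10, h11]; ring
      · show ((σe e₂ : V) : HS k) 0 = _
        rw [hσF, F0]
        show y₂ 0 * x + y₂ 1 * w = w
        rw [h20, h21]; ring
      · show ((σe e₁ : V) : HS k) 1 = _
        rw [hσF, F1]
        show y₁ 0 * w + y₁ 1 * (x + w) = w
        rw [h10, h11]; ring
      · show ((σe e₂ : V) : HS k) 1 = _
        rw [hσF, F1]
        show y₂ 0 * w + y₂ 1 * (x + w) = x + w
        rw [h20, h21]; ring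
  refine ⟨Cf, hb1, hb2, hinj, hmul, hrange, ?_⟩
  · ext U
    simp only [Set.mem_setOf_eq]
    constructor
    · rintro ⟨hU, x, w, rfl⟩
      refine ⟨hU, ?_⟩
      rw [Submodule.mem_span_pair]
      refine ⟨x, w, ?_⟩
      ext i j
      fin_cases i <;> fin_cases j <;>
        simp [Matrix.one_apply]
    · rintro ⟨hU, hmem⟩
      rw [Submodule.mem_span_pair] at hmem
      obtain ⟨a, b, rfl⟩ := hmem
      refine ⟨hU, a, b, ?_⟩
      ext i j
      fin_cases i <;> fin_cases j <;>
        simp [Matrix.one_apply]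
end
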